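/- arXiv:2512.07946 — 2 statements merged into one kernel-verified Lean document; each statement's English description precedes it below -/
import Mathlib

section
/- Let σ > 0. The function ε ↦ ∫_{|t| ≥ ε} (2πσ²)^(-1/2) · exp(-t²/(2σ²)) · |t|^(-1) dt − 2·(2πσ²)^(-1/2)·log(1/ε) converges to a finite limit as ε → 0⁺. -/
open MeasureTheory Filter Topology Set

theorem renormalized_kernel_at_half
    (σ : ℝ) (hσ : 0 < σ) :
    ∃ L : ℝ, Tendsto (fun ε : ℝ =>
        (∫ t in {t : ℝ | ε ≤ |t|}, (2 * Real.pi * σ ^ 2) ^ (-(1 / 2 : ℝ)) *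
            Real.exp (-t ^ 2 / (2 * σ ^ 2)) * |t| ^ (-1 : ℝ)) -
          2 * (2 * Real.pi * σ ^ 2) ^ (-(1 / 2 : ℝ)) * Real.log (1 / ε))
      (𝓝[>] (0 : ℝ)) (𝓝 L) := by
  set c : ℝ := (2 * Real.pi * σ ^ 2) ^ (-(1 / 2 : ℝ)) with hc_def
  have hc : 0 < c := Real.rpow_pos_of_pos (by positivity) _
  set f : ℝ → ℝ := fun t => c * Real.exp (-t ^ 2 / (2 * σ ^ 2)) * |t| ^ (-1 : ℝ) with hf_def
  set g : ℝ → ℝ := fun t => c * (Real.exp (-t ^ 2 / (2 * σ ^ 2)) - 1) * t⁻¹ with hg_def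
  have hσ2 : (0:ℝ) < 2 * σ ^ 2 := by positivity
  have hf_meas : Measurable f := by
    apply Measurable.mul
    · exact (measurable_const.mul ((measurable_id.pow_const 2).neg.div_const _).exp)
    · exact measurable_abs.pow measurable_const
  have hg_meas : Measurable g := by
    apply Measurable.mul
    · exact measurable_const.mul
        (((measurable_id.pow_const 2).neg.div_const _).exp.sub measurable_const)
    · exact measurable_inv
  -- bound on g : ‖g t‖ ≤ c / (2σ²) on Ioc 0 1
  have hg_bound : ∀ t ∈ Ioc (0:ℝ) 1, ‖g t‖ ≤ c / (2 * σ ^ 2) := by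
    intro t ht
    have ht0 : 0 < t := ht.1
    have hnd : -t ^ 2 / (2 * σ ^ 2) = -(t ^ 2 / (2 * σ ^ 2)) := neg_div _ _
    have hq : (0:ℝ) ≤ t ^ 2 / (2 * σ ^ 2) := by positivity
    have hexp : Real.exp (-t ^ 2 / (2 * σ ^ 2)) ≤ 1 := by
      apply Real.exp_le_one_iff.mpr; linarith
    have hexp2 : 1 - t ^ 2 / (2 * σ ^ 2) ≤ Real.exp (-t ^ 2 / (2 * σ ^ 2)) := by
      have h := Real.add_one_le_exp (-t ^ 2 / (2 * σ ^ 2))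
      linarith
    have habs : |Real.exp (-t ^ 2 / (2 * σ ^ 2)) - 1| ≤ t ^ 2 / (2 * σ ^ 2) := by
      rw [abs_le]; constructor <;> linarith
    have hnorm : ‖g t‖ = c * |Real.exp (-t ^ 2 / (2 * σ ^ 2)) - 1| * t⁻¹ := by
      rw [hg_def]
      simp only [Real.norm_eq_abs, abs_mul, abs_of_pos hc, abs_inv, abs_of_pos ht0]
    rw [hnorm]
    have h1 : c * |Real.exp (-t ^ 2 / (2 * σ ^ 2)) - 1| * t⁻¹ ≤
        c * (t ^ 2 / (2 * σ ^ 2)) * t⁻¹ := by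
      apply mul_le_mul_of_nonneg_right _ (le_of_lt (inv_pos.mpr ht0))
      exact mul_le_mul_of_nonneg_left habs hc.le
    have h2 : c * (t ^ 2 / (2 * σ ^ 2)) * t⁻¹ = c / (2 * σ ^ 2) * t := by
      field_simp
    calc c * |Real.exp (-t ^ 2 / (2 * σ ^ 2)) - 1| * t⁻¹ ≤ c / (2 * σ ^ 2) * t := by
          rw [← h2]; exact h1
      _ ≤ c / (2 * σ ^ 2) := by nlinarith [ht.2, div_pos hc hσ2]
  have hg_int : IntegrableOn g (Ioc (0:ℝ) 1) :=
    Measure.integrableOn_of_bounded (measure_Ioc_lt_top).ne hg_meas.aestronglyMeasurable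
      ((ae_restrict_iff' measurableSet_Ioc).mpr (ae_of_all _ hg_bound))
  have hSmeas : ∀ a : ℝ, MeasurableSet {t : ℝ | a ≤ |t|} :=
    fun a => measurableSet_le measurable_const measurable_abs
  -- integrability of f on {t | a ≤ |t|}, a > 0
  have hf_int : ∀ a : ℝ, 0 < a → IntegrableOn f {t : ℝ | a ≤ |t|} := by
    intro a ha
    have hgauss : Integrable (fun t : ℝ => (c * a⁻¹) * Real.exp (-(1 / (2 * σ ^ 2)) * t ^ 2)) :=
      (integrable_exp_neg_mul_sq (by positivity)).const_mul _
    apply Integrable.mono hgauss.integrableOn hf_meas.aestronglyMeasurable.restrict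
    apply (ae_restrict_iff' (hSmeas a)).mpr (ae_of_all _ ?_)
    intro t ht
    have ht0 : 0 < |t| := lt_of_lt_of_le ha ht
    have hrpow : |t| ^ (-1 : ℝ) = |t|⁻¹ := Real.rpow_neg_one _
    have hexp_pos : 0 < Real.exp (-t ^ 2 / (2 * σ ^ 2)) := Real.exp_pos _
    have hpos1 : 0 < c * Real.exp (-t ^ 2 / (2 * σ ^ 2)) * |t|⁻¹ :=
      mul_pos (mul_pos hc hexp_pos) (inv_pos.mpr ht0)
    have hpos2 : 0 < c * a⁻¹ * Real.exp (-(1 / (2 * σ ^ 2)) * t ^ 2) :=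
      mul_pos (mul_pos hc (inv_pos.mpr ha)) (Real.exp_pos _)
    have h1 : ‖f t‖ = c * Real.exp (-t ^ 2 / (2 * σ ^ 2)) * |t|⁻¹ := by
      simp only [hf_def, hrpow, Real.norm_eq_abs]
      exact abs_of_pos hpos1
    have h2 : -t ^ 2 / (2 * σ ^ 2) = -(1 / (2 * σ ^ 2)) * t ^ 2 := by ring
    have h3 : ‖c * a⁻¹ * Real.exp (-(1 / (2 * σ ^ 2)) * t ^ 2)‖
        = c * a⁻¹ * Real.exp (-(1 / (2 * σ ^ 2)) * t ^ 2) := by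
      rw [Real.norm_eq_abs]; exact abs_of_pos hpos2
    rw [h1, h3, h2]
    have hinv : |t|⁻¹ ≤ a⁻¹ := inv_anti₀ ha ht
    calc c * Real.exp (-(1 / (2 * σ ^ 2)) * t ^ 2) * |t|⁻¹
        ≤ c * Real.exp (-(1 / (2 * σ ^ 2)) * t ^ 2) * a⁻¹ :=
          mul_le_mul_of_nonneg_left hinv (by positivity)
      _ = c * a⁻¹ * Real.exp (-(1 / (2 * σ ^ 2)) * t ^ 2) := by ring
  -- symmetry: f (-t) = f t
  have hf_even : ∀ t : ℝ, f (-t) = f t := by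
    intro t; rw [hf_def]; simp [neg_pow]
  -- main decomposition for 0 < ε < 1
  have key : ∀ ε : ℝ, ε ∈ Ioo (0:ℝ) 1 →
      (∫ t in {t : ℝ | ε ≤ |t|}, f t) - 2 * c * Real.log (1 / ε) =
      2 * (∫ t in Ioc ε 1, g t) + 2 * (∫ t in Ioi (1:ℝ), f t) := by
    intro ε hε
    obtain ⟨hε0, hε1⟩ := hε
    have hset : {t : ℝ | ε ≤ |t|} = Iic (-ε) ∪ Ici ε := by
      ext t; simp [le_abs, le_neg, or_comm]
    have hsub1 : Iic (-ε) ⊆ {t : ℝ | ε ≤ |t|} := by rw [hset]; exact subset_union_left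
    have hsub2 : Ici ε ⊆ {t : ℝ | ε ≤ |t|} := by rw [hset]; exact subset_union_right
    have hsub3 : Ioi ε ⊆ {t : ℝ | ε ≤ |t|} := fun t ht => by
      simp only [mem_setOf_eq]
      exact le_trans (le_of_lt ht) (le_abs_self t)
    have hsub4 : Ioi (1:ℝ) ⊆ {t : ℝ | (1:ℝ) ≤ |t|} := fun t ht =>
      le_trans (le_of_lt ht) (le_abs_self t)
    have hsplit1 : (∫ t in {t : ℝ | ε ≤ |t|}, f t)
        = (∫ t in Iic (-ε), f t) + ∫ t in Ici ε, f t := by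
      rw [hset]
      exact setIntegral_union (Iic_disjoint_Ici.mpr (by linarith)) measurableSet_Ici
        ((hf_int ε hε0).mono_set hsub1) ((hf_int ε hε0).mono_set hsub2)
    have hsym : (∫ t in Iic (-ε), f t) = ∫ t in Ioi ε, f t := by
      rw [show (∫ t in Iic (-ε), f t) = ∫ t in Iic (-ε), f (-t) by simp only [hf_even],
        integral_comp_neg_Iic, neg_neg]
    have hIci : (∫ t in Ici ε, f t) = ∫ t in Ioi ε, f t := integral_Ici_eq_integral_Ioi
    have hsplit2 : (∫ t in Ioi ε, f t) = (∫ t in Ioc ε 1, f t) + ∫ t in Ioi (1:ℝ), f t := by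
      rw [← Ioc_union_Ioi_eq_Ioi hε1.le]
      exact setIntegral_union (Ioc_disjoint_Ioi le_rfl) measurableSet_Ioi
        ((hf_int ε hε0).mono_set (Ioc_subset_Ioi_self.trans hsub3))
        ((hf_int 1 one_pos).mono_set hsub4)
    have hinv_int : IntegrableOn (fun t : ℝ => c * t⁻¹) (Ioc ε 1) := by
      refine Measure.integrableOn_of_bounded (M := c * ε⁻¹) measure_Ioc_lt_top.ne
        (measurable_const.mul measurable_inv).aestronglyMeasurable
        ((ae_restrict_iff' measurableSet_Ioc).mpr (ae_of_all _ ?_))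
      intro t ht
      have ht0 : 0 < t := hε0.trans ht.1
      rw [Real.norm_eq_abs, abs_of_pos (by positivity : (0:ℝ) < c * t⁻¹)]
      exact mul_le_mul_of_nonneg_left (inv_anti₀ hε0 ht.1.le) hc.le
    have hf_split : ∀ t ∈ Ioc ε 1, f t = g t + c * t⁻¹ := by
      intro t ht
      have ht0 : 0 < t := hε0.trans ht.1
      rw [hf_def, hg_def]
      simp only [abs_of_pos ht0, Real.rpow_neg_one]
      ring
    have hmid : (∫ t in Ioc ε 1, f t) = (∫ t in Ioc ε 1, g t) + c * Real.log (1 / ε) := by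
      rw [setIntegral_congr_fun measurableSet_Ioc hf_split,
        integral_add (hg_int.mono_set (Ioc_subset_Ioc_left hε0.le)) hinv_int,
        integral_const_mul]
      congr 1
      have h0 : (∫ t in Ioc ε 1, t⁻¹) = ∫ t in ε..1, 1 / t := by
        rw [intervalIntegral.integral_of_le hε1.le]
        simp [one_div]
      rw [h0, integral_one_div (by
        intro h
        rw [Set.uIcc_of_le hε1.le] at h
        exact absurd h.1 (not_le.mpr hε0))]
    rw [hsplit1, hsym, hIci, hsplit2, hmid]
    ring
  -- the limit
  refine ⟨2 * (∫ t in Ioc (0:ℝ) 1, g t) + 2 * (∫ t in Ioi (1:ℝ), f t), ?_⟩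
  have hmem : ∀ᶠ ε in 𝓝[>] (0:ℝ), ε ∈ Ioo (0:ℝ) 1 :=
    Ioo_mem_nhdsGT_of_mem ⟨le_rfl, one_pos⟩
  apply Tendsto.congr' (hmem.mono fun ε hε => (key ε hε).symm)
  -- tendsto of the g-integral
  have htend : Tendsto (fun ε : ℝ => ∫ t in Ioc ε 1, g t) (𝓝[>] (0:ℝ))
      (𝓝 (∫ t in Ioc (0:ℝ) 1, g t)) := by
    have hrw : ∀ ε : ℝ, (∫ t in Ioc ε 1, g t) = ∫ t, (Ioc ε 1).indicator g t := by
      intro ε; rw [integral_indicator measurableSet_Ioc]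
    simp only [hrw]
    apply tendsto_integral_filter_of_dominated_convergence
      ((Ioc (0:ℝ) 1).indicator (fun _ => c / (2 * σ ^ 2)))
    · exact Eventually.of_forall fun ε =>
        (hg_meas.indicator measurableSet_Ioc).aestronglyMeasurable
    · filter_upwards [self_mem_nhdsWithin] with ε (hε : 0 < ε)
      apply ae_of_all
      intro t
      by_cases ht : t ∈ Ioc ε 1
      · have ht' : t ∈ Ioc (0:ℝ) 1 := ⟨hε.trans ht.1, ht.2⟩
        rw [indicator_of_mem ht, indicator_of_mem ht']
        exact hg_bound t ht'
      · rw [indicator_of_notMem ht]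
        simp only [norm_zero]
        by_cases ht' : t ∈ Ioc (0:ℝ) 1
        · rw [indicator_of_mem ht']; positivity
        · rw [indicator_of_notMem ht']
    · exact (integrableOn_const measure_Ioc_lt_top.ne).integrable_indicator
        measurableSet_Ioc
    · apply ae_of_all
      intro t
      by_cases ht : t ∈ Ioc (0:ℝ) 1
      · have hev : (fun _ : ℝ => (Ioc (0:ℝ) 1).indicator g t)
            =ᶠ[𝓝[>] (0:ℝ)] fun ε => (Ioc ε 1).indicator g t := by
          filter_upwards [Ioo_mem_nhdsGT_of_mem
            (show (0:ℝ) ∈ Ico 0 t from ⟨le_rfl, ht.1⟩)] with ε hε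
          have h1 : t ∈ Ioc ε 1 := ⟨hε.2, ht.2⟩
          rw [indicator_of_mem ht g, indicator_of_mem h1 g]
        exact Tendsto.congr' hev tendsto_const_nhds
      · have hev : (fun _ : ℝ => (Ioc (0:ℝ) 1).indicator g t)
            =ᶠ[𝓝[>] (0:ℝ)] fun ε => (Ioc ε 1).indicator g t := by
          filter_upwards [self_mem_nhdsWithin] with ε (hε : 0 < ε)
          rw [indicator_of_notMem ht g, indicator_of_notMem (fun hmem =>
            ht ⟨hε.trans hmem.1, hmem.2⟩) g]
        exact Tendsto.congr' hev tendsto_const_nhds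
  exact ((htend.const_mul 2).add tendsto_const_nhds)
end

section
/- Let σ > 0 and let Δ be a real number with 1/2 < Δ < 3/2. The function ε ↦ ∫_{|t| ≥ ε} (2πσ²)^(-1/2) · exp(-t²/(2σ²)) · |t|^(-2Δ) dt − (2πσ²)^(-1/2) · (2/(2Δ-1)) · ε^(1-2Δ) converges to a finite limit as ε → 0⁺, where powers are real powers. -/
open MeasureTheory Filter Topology
open Set

theorem renormalized_kernel_beyond_window
    (σ : ℝ) (hσ : 0 < σ) (Δ : ℝ) (hΔ₁ : 1 / 2 < Δ) (hΔ₂ : Δ < 3 / 2) :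
    ∃ L : ℝ, Tendsto (fun ε : ℝ =>
        (∫ t in {t : ℝ | ε ≤ |t|}, (2 * Real.pi * σ ^ 2) ^ (-(1 / 2 : ℝ)) *
            Real.exp (-t ^ 2 / (2 * σ ^ 2)) * |t| ^ (-(2 * Δ))) -
          (2 * Real.pi * σ ^ 2) ^ (-(1 / 2 : ℝ)) * (2 / (2 * Δ - 1)) * ε ^ (1 - 2 * Δ))
      (𝓝[>] (0 : ℝ)) (𝓝 L) := by
  set C : ℝ := (2 * Real.pi * σ ^ 2) ^ (-(1 / 2 : ℝ)) with hCdef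
  have hC : 0 < C := Real.rpow_pos_of_pos (by positivity) _
  set f : ℝ → ℝ := fun t => C * Real.exp (-t ^ 2 / (2 * σ ^ 2)) * |t| ^ (-(2 * Δ)) with hfdef
  set g : ℝ → ℝ := fun t => C * (Real.exp (-t ^ 2 / (2 * σ ^ 2)) - 1) * |t| ^ (-(2 * Δ))
    with hgdef
  have hσ2 : (0:ℝ) < 2 * σ ^ 2 := by positivity
  have h2Δ : (1:ℝ) < 2 * Δ := by linarith
  -- continuity away from 0
  have habs : ∀ t : ℝ, t ≠ 0 → ContinuousAt (fun t : ℝ => |t| ^ (-(2*Δ))) t := by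
    intro t ht
    exact (Real.continuousAt_rpow_const |t| _ (Or.inl (abs_ne_zero.mpr ht))).comp
      continuous_abs.continuousAt
  have hexp_cont : Continuous fun t : ℝ => Real.exp (-t ^ 2 / (2 * σ ^ 2)) := by
    continuity
  have hfc : ∀ s : Set ℝ, (0:ℝ) ∉ s → ContinuousOn f s := by
    intro s hs
    refine ContinuousOn.mul (by fun_prop) ?_
    intro t ht
    exact (habs t (fun h => hs (h ▸ ht))).continuousWithinAt
  have hgc : ∀ s : Set ℝ, (0:ℝ) ∉ s → ContinuousOn g s := by
    intro s hs
    refine ContinuousOn.mul (by fun_prop) ?_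
    intro t ht
    exact (habs t (fun h => hs (h ▸ ht))).continuousWithinAt
  -- integrability of g on Ioc 0 1
  have hg_int : IntegrableOn g (Ioc (0:ℝ) 1) := by
    have hmaj : Integrable (fun t : ℝ => (C / (2 * σ ^ 2)) * t ^ ((2:ℝ) - 2 * Δ))
        (volume.restrict (Ioc (0:ℝ) 1)) := by
      have : IntervalIntegrable (fun t : ℝ => t ^ ((2:ℝ) - 2*Δ)) volume 0 1 :=
        intervalIntegral.intervalIntegrable_rpow' (by linarith)
      exact (this.1.mono_set (by simp [Set.Ioc_subset_Ioc_right])).const_mul _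
    refine Integrable.mono' hmaj ?_ ?_
    · exact (hgc _ (by simp)).aestronglyMeasurable measurableSet_Ioc
    · refine (ae_restrict_iff' measurableSet_Ioc).mpr (Filter.Eventually.of_forall ?_)
      intro t ht
      have ht0 : 0 < t := ht.1
      have habs_t : |t| = t := abs_of_pos ht0
      have h1 : |Real.exp (-t ^ 2 / (2 * σ ^ 2)) - 1| ≤ t ^ 2 / (2 * σ ^ 2) := by
        have hA : 1 - t ^ 2 / (2 * σ ^ 2) ≤ Real.exp (-t ^ 2 / (2 * σ ^ 2)) :=
          calc 1 - t ^ 2 / (2 * σ ^ 2) = -t ^ 2 / (2 * σ ^ 2) + 1 := by ring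
            _ ≤ _ := Real.add_one_le_exp _
        have hB : Real.exp (-t ^ 2 / (2 * σ ^ 2)) ≤ 1 := by
          refine Real.exp_le_one_iff.mpr ?_
          rw [neg_div]; exact neg_nonpos.mpr (by positivity)
        rw [abs_sub_comm, abs_of_nonneg (by linarith)]
        linarith
      have h2 : (0:ℝ) ≤ t ^ (-(2*Δ)) := Real.rpow_nonneg ht0.le _
      have key : t ^ (2:ℝ) * t ^ (-(2*Δ)) = t ^ ((2:ℝ) - 2*Δ) := by
        rw [← Real.rpow_add ht0]; ring_nf
      have ht2 : t ^ (2:ℕ) = t ^ (2:ℝ) := by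
        rw [← Real.rpow_natCast t 2]; norm_num
      calc ‖g t‖ = C * |Real.exp (-t ^ 2 / (2 * σ ^ 2)) - 1| * t ^ (-(2*Δ)) := by
            simp only [hgdef, Real.norm_eq_abs, abs_mul, habs_t, abs_of_pos hC,
              abs_of_nonneg h2]
        _ ≤ C * (t ^ 2 / (2 * σ ^ 2)) * t ^ (-(2*Δ)) := by
            apply mul_le_mul_of_nonneg_right (mul_le_mul_of_nonneg_left h1 hC.le) h2
        _ = (C / (2 * σ ^ 2)) * t ^ ((2:ℝ) - 2*Δ) := by
            rw [← key, ← ht2]; ring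
  -- integrability of f on Ioi 1
  have hf_int1 : IntegrableOn f (Ioi (1:ℝ)) := by
    have hmaj : Integrable (fun t : ℝ => C * t ^ (-(2*Δ))) (volume.restrict (Ioi (1:ℝ))) :=
      (integrableOn_Ioi_rpow_of_lt (by linarith) one_pos).const_mul _
    refine Integrable.mono' hmaj ?_ ?_
    · exact (hfc _ (by simp)).aestronglyMeasurable measurableSet_Ioi
    · refine (ae_restrict_iff' measurableSet_Ioi).mpr (Filter.Eventually.of_forall ?_)
      intro t ht
      have ht0 : (0:ℝ) < t := lt_trans one_pos ht
      have habs_t : |t| = t := abs_of_pos ht0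
      have h2 : (0:ℝ) ≤ t ^ (-(2*Δ)) := Real.rpow_nonneg ht0.le _
      have hexp1 : Real.exp (-t ^ 2 / (2 * σ ^ 2)) ≤ 1 := by
        refine Real.exp_le_one_iff.mpr ?_
        rw [neg_div]; exact neg_nonpos.mpr (by positivity)
      calc ‖f t‖ = C * Real.exp (-t ^ 2 / (2 * σ ^ 2)) * t ^ (-(2*Δ)) := by
            simp only [hfdef, Real.norm_eq_abs, abs_mul, habs_t, abs_of_pos hC,
              abs_of_nonneg h2, abs_of_pos (Real.exp_pos _)]
        _ ≤ C * 1 * t ^ (-(2*Δ)) := by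
            apply mul_le_mul_of_nonneg_right (mul_le_mul_of_nonneg_left hexp1 hC.le) h2
        _ = C * t ^ (-(2*Δ)) := by ring
  -- integrability of f on {t | ε ≤ |t|} for 0 < ε
  have hf_intS : ∀ ε : ℝ, 0 < ε → IntegrableOn f {t : ℝ | ε ≤ |t|} := by
    intro ε hε
    have hms : MeasurableSet {t : ℝ | ε ≤ |t|} :=
      (isClosed_le continuous_const continuous_abs).measurableSet
    have hmaj : Integrable
        (fun t : ℝ => (C * ε ^ (-(2*Δ))) * Real.exp (-(1/(2*σ^2)) * t ^ 2))
        (volume.restrict {t : ℝ | ε ≤ |t|}) := by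
      exact ((integrable_exp_neg_mul_sq (by positivity)).const_mul _).restrict
    refine Integrable.mono' hmaj ?_ ?_
    · refine (hfc _ ?_).aestronglyMeasurable hms
      simp [Set.mem_setOf_eq, abs_zero]; linarith
    · refine (ae_restrict_iff' hms).mpr (Filter.Eventually.of_forall ?_)
      intro t ht
      have ht' : ε ≤ |t| := ht
      have h2 : (0:ℝ) ≤ |t| ^ (-(2*Δ)) := Real.rpow_nonneg (abs_nonneg t) _
      have hle : |t| ^ (-(2*Δ)) ≤ ε ^ (-(2*Δ)) :=
        Real.rpow_le_rpow_of_nonpos hε ht' (by linarith)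
      have hexp : Real.exp (-t ^ 2 / (2 * σ ^ 2)) =
          Real.exp (-(1/(2*σ^2)) * t ^ 2) := by ring_nf
      calc ‖f t‖ = C * Real.exp (-t ^ 2 / (2 * σ ^ 2)) * |t| ^ (-(2*Δ)) := by
            simp only [hfdef, Real.norm_eq_abs, abs_mul, abs_abs, abs_of_pos hC,
              abs_of_nonneg h2, abs_of_pos (Real.exp_pos _)]
        _ ≤ C * Real.exp (-t ^ 2 / (2 * σ ^ 2)) * ε ^ (-(2*Δ)) := by
            apply mul_le_mul_of_nonneg_left hle (by positivity)
        _ = (C * ε ^ (-(2*Δ))) * Real.exp (-(1/(2*σ^2)) * t ^ 2) := by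
            rw [hexp]; ring
  -- evenness
  have heven : ∀ x : ℝ, f (-x) = f x := by
    intro x; simp only [hfdef, abs_neg, neg_sq]
  -- the limit value
  set Iinf : ℝ := ∫ t in Ioi (1:ℝ), f t with hIinf
  set J : ℝ := ∫ t in (0:ℝ)..1, g t with hJ
  refine ⟨2 * J + 2 * Iinf - 2 * C / (2 * Δ - 1), ?_⟩
  -- the eventual formula
  have hformula : ∀ ε : ℝ, ε ∈ Ioo (0:ℝ) 1 →
      (∫ t in {t : ℝ | ε ≤ |t|}, f t) - C * (2 / (2 * Δ - 1)) * ε ^ (1 - 2 * Δ)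
        = 2 * (∫ t in ε..1, g t) + 2 * Iinf - 2 * C / (2 * Δ - 1) := by
    rintro ε ⟨hε, hε1⟩
    have hεab : (0:ℝ) ∉ Set.uIcc ε 1 := by
      rw [Set.uIcc_of_le hε1.le]; intro h; exact absurd h.1 (not_le.mpr hε)
    -- split the set
    have hset : {t : ℝ | ε ≤ |t|} = Iic (-ε) ∪ Ici ε := by
      ext t
      simp only [Set.mem_setOf_eq, Set.mem_union, Set.mem_Iic, Set.mem_Ici, le_abs, le_neg]
      tauto
    have hsub1 : Iic (-ε) ⊆ {t : ℝ | ε ≤ |t|} := by rw [hset]; exact Set.subset_union_left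
    have hsub2 : Ici ε ⊆ {t : ℝ | ε ≤ |t|} := by rw [hset]; exact Set.subset_union_right
    have hIS := hf_intS ε hε
    have h1 : (∫ t in {t : ℝ | ε ≤ |t|}, f t)
        = (∫ t in Iic (-ε), f t) + ∫ t in Ici ε, f t := by
      rw [hset]
      exact setIntegral_union (Set.Iic_disjoint_Ici.mpr (by intro h; linarith))
        measurableSet_Ici (hIS.mono_set hsub1) (hIS.mono_set hsub2)
    have h2 : (∫ t in Iic (-ε), f t) = ∫ t in Ioi ε, f t := by
      have := integral_comp_neg_Iic (-ε) f
      simp only [heven, neg_neg] at this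
      exact this
    have h3 : (∫ t in Ici ε, f t) = ∫ t in Ioi ε, f t := integral_Ici_eq_integral_Ioi
    have hIoc_int : IntegrableOn f (Ioc ε 1) :=
      hIS.mono_set (fun t ht => le_trans ht.1.le (le_abs_self t))
    have h4 : (∫ t in Ioi ε, f t) = (∫ t in Ioc ε 1, f t) + Iinf := by
      rw [← Set.Ioc_union_Ioi_eq_Ioi hε1.le]
      exact setIntegral_union (Set.Ioc_disjoint_Ioi le_rfl) measurableSet_Ioi
        hIoc_int hf_int1
    have h5 : (∫ t in Ioc ε 1, f t) = ∫ t in ε..1, f t :=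
      (intervalIntegral.integral_of_le hε1.le).symm
    -- split f into g + C * power on [ε, 1]
    have hgint : IntervalIntegrable g volume ε 1 := by
      rw [intervalIntegrable_iff_integrableOn_Ioc_of_le hε1.le]
      exact hg_int.mono_set (Set.Ioc_subset_Ioc_left hε.le)
    have hpint : IntervalIntegrable (fun t : ℝ => C * t ^ (-(2*Δ))) volume ε 1 :=
      (intervalIntegral.intervalIntegrable_rpow (Or.inr hεab)).const_mul _
    have h6 : (∫ t in ε..1, f t)
        = (∫ t in ε..1, g t) + ∫ t in ε..1, C * t ^ (-(2*Δ)) := by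
      rw [← intervalIntegral.integral_add hgint hpint]
      apply intervalIntegral.integral_congr
      intro t ht
      rw [Set.uIcc_of_le hε1.le] at ht
      have : |t| = t := abs_of_pos (lt_of_lt_of_le hε ht.1)
      simp only [hfdef, hgdef, this]; ring
    have h7 : (∫ t in ε..1, C * t ^ (-(2*Δ)))
        = C * ((1 - ε ^ (1 - 2*Δ)) / (1 - 2*Δ)) := by
      rw [intervalIntegral.integral_const_mul,
        integral_rpow (Or.inr ⟨by intro h; rw [neg_eq_iff_eq_neg] at h; linarith, hεab⟩),
        show -(2*Δ) + 1 = 1 - 2*Δ from by ring, Real.one_rpow]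
    rw [h1, h2, h3, h4, h5, h6, h7]
    have hden : 2 * Δ - 1 ≠ 0 := by intro h; linarith
    have hden' : 1 - 2 * Δ ≠ 0 := by intro h; linarith
    field_simp
    ring
  -- the limit
  have hIcc_int : IntegrableOn g (uIcc (0:ℝ) 1) := by
    rw [Set.uIcc_of_le zero_le_one]
    exact (integrableOn_Icc_iff_integrableOn_Ioc).mpr hg_int
  have hcont := intervalIntegral.continuousOn_primitive_interval_left hIcc_int
  have htend0 : Tendsto (fun x : ℝ => ∫ t in x..1, g t) (𝓝[>] (0:ℝ)) (𝓝 J) := by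
    have h := (hcont 0 Set.left_mem_uIcc).tendsto
    refine h.mono_left ?_
    rw [Set.uIcc_of_le zero_le_one, ← nhdsWithin_Ioo_eq_nhdsGT (zero_lt_one (α := ℝ))]
    exact nhdsWithin_mono _ Set.Ioo_subset_Icc_self
  have hmain : Tendsto (fun ε : ℝ => 2 * (∫ t in ε..1, g t) + 2 * Iinf - 2 * C / (2 * Δ - 1))
      (𝓝[>] (0:ℝ)) (𝓝 (2 * J + 2 * Iinf - 2 * C / (2 * Δ - 1))) := by
    exact (((htend0.const_mul 2).add_const (2 * Iinf)).sub_const (2 * C / (2 * Δ - 1)))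
  refine hmain.congr' ?_
  filter_upwards [Ioo_mem_nhdsGT zero_lt_one] with ε hε
  exact (hformula ε hε).symm
end
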